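/- Let A be a nonnegative selfadjoint operator on a complex Hilbert space X with trivial kernel. For α > 0, define A_α on the Hilbert space R(A^α) (with the norm of Lemma on the range) by D(A_α) = D(A) ∩ R(A^α) and A_α u = A u. Then A_α is a densely defined, nonnegative, selfadjoint operator in R(A^α); in particular the range condition R(I + A_α) = R(A^α) holds. -/

import Mathlib

/-!
By the spectral theorem, every nonnegative selfadjoint operator `A` on a complex
Hilbert space `X` (with trivial kernel) is unitarily equivalent to multiplication by a
measurable function `a ≥ 0` (with `a > 0` a.e.) on some `L²(μ)`.  We formalize the
statement in this spectral model: `X = L²(μ)`, `(e^{-tA}x)(i) = exp(-t·a i)·x i`,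
`(A^α y)(i) = (a i)^α·y i`, and `x ∈ R(A^α)` iff `x = A^α y` for some `y ∈ L²(μ)`.
-/

open MeasureTheory Filter
open scoped ENNReal NNReal Topology

/-- `‖e^{-tA} x‖²` in the spectral model. -/
noncomputable def heatNormSq {ι : Type*} [MeasurableSpace ι] (μ : Measure ι)
    (a : ι → ℝ) (x : ι → ℂ) (t : ℝ) : ℝ≥0∞ :=
  ∫⁻ i, (‖x i‖₊ : ℝ≥0∞) ^ 2 * ENNReal.ofReal (Real.exp (-(2 * t * a i))) ∂μ

/-- `∫₀^∞ t^{2α-1} ‖e^{-tA} x‖² dt` in the spectral model; this is the square of the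
norm `|||x|||_{R(A^α)}`. -/
noncomputable def rangeIntegral {ι : Type*} [MeasurableSpace ι] (μ : Measure ι)
    (a : ι → ℝ) (α : ℝ) (x : ι → ℂ) : ℝ≥0∞ :=
  ∫⁻ t in Set.Ioi (0 : ℝ), ENNReal.ofReal (t ^ (2 * α - 1)) * heatNormSq μ a x t

/-- Membership of `x` in `R(A^α)` in the spectral model. -/
def memRange {ι : Type*} [MeasurableSpace ι] (μ : Measure ι)
    (a : ι → ℝ) (α : ℝ) (x : ι → ℂ) : Prop :=
  MemLp x 2 μ ∧ ∃ y : ι → ℂ, MemLp y 2 μ ∧ x =ᵐ[μ] fun i => ((a i ^ α : ℝ) : ℂ) * y i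

/-- Membership of `u` in `D(A_α) = D(A) ∩ R(A^α)` in the spectral model. -/
def memDomAalpha {ι : Type*} [MeasurableSpace ι] (μ : Measure ι)
    (a : ι → ℝ) (α : ℝ) (u : ι → ℂ) : Prop :=
  memRange μ a α u ∧ MemLp (fun i => (a i : ℂ) * u i) 2 μ

/-- The inner product of `R(A^α)`:
`⟨x,y⟩_{R(A^α)} = ⟨x,y⟩_X + ∫₀^∞ t^{2α-1} ⟨e^{-tA}x, e^{-tA}y⟩_X dt`. -/
noncomputable def innerRange {ι : Type*} [MeasurableSpace ι] (μ : Measure ι)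
    (a : ι → ℝ) (α : ℝ) (x y : ι → ℂ) : ℂ :=
  (∫ i, (starRingEnd ℂ) (x i) * y i ∂μ) +
    ∫ t in Set.Ioi (0 : ℝ), ((t ^ (2 * α - 1) : ℝ) : ℂ) *
      ∫ i, ((Real.exp (-(2 * t * a i)) : ℝ) : ℂ) * ((starRingEnd ℂ) (x i) * y i) ∂μ

section auxstmt
set_option linter.unusedVariables false

lemma sq_eLpNorm {ι : Type*} [MeasurableSpace ι] (μ : Measure ι) (f : ι → ℂ) :
    eLpNorm f 2 μ ^ 2 = ∫⁻ i, (‖f i‖₊ : ℝ≥0∞) ^ 2 ∂μ := by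
  rw [eLpNorm_eq_lintegral_rpow_enorm_toReal two_ne_zero ENNReal.ofNat_ne_top]
  simp only [enorm_eq_nnnorm]
  rw [ENNReal.toReal_ofNat]
  rw [← ENNReal.rpow_natCast _ 2, ← ENNReal.rpow_mul]
  norm_num

lemma lintegral_K {α s : ℝ} (hα : 0 < α) (hs : 0 < s) :
    ∫⁻ t in Set.Ioi (0:ℝ), ENNReal.ofReal (t ^ (2*α - 1)) * ENNReal.ofReal (Real.exp (-(2*t*s)))
      = ENNReal.ofReal ((1/(2*s)) ^ (2*α) * Real.Gamma (2*α)) := by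
  have h2s : (0:ℝ) < 2*s := by positivity
  have hint : IntegrableOn (fun t : ℝ => t ^ (2*α-1) * Real.exp (-(2*s*t))) (Set.Ioi 0) := by
    have h := integrableOn_rpow_mul_exp_neg_mul_rpow (s := 2*α-1) (p := 1) (b := 2*s)
      (by linarith) one_pos h2s
    refine h.congr_fun (fun t ht => ?_) measurableSet_Ioi
    beta_reduce; rw [Real.rpow_one]; ring_nf
  have hnn : 0 ≤ᵐ[volume.restrict (Set.Ioi (0:ℝ))]
      fun t : ℝ => t ^ (2*α-1) * Real.exp (-(2*s*t)) := by
    rw [Filter.EventuallyLE, ae_restrict_iff' measurableSet_Ioi]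
    exact Eventually.of_forall fun t ht => by
      have ht' : (0:ℝ) < t := ht
      positivity
  have key := ofReal_integral_eq_lintegral_ofReal hint hnn
  rw [Real.integral_rpow_mul_exp_neg_mul_Ioi (by linarith : (0:ℝ) < 2*α) h2s] at key
  rw [key]
  refine setLIntegral_congr_fun measurableSet_Ioi (fun t ht => ?_)
  rw [← ENNReal.ofReal_mul (Real.rpow_nonneg (le_of_lt ht) _)]
  have h3 : 2*t*s = 2*s*t := by ring
  rw [h3]


variable {ι : Type*} [MeasurableSpace ι] (μ : Measure ι) (a : ι → ℝ) (α : ℝ)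

lemma part1 (hameas : Measurable a) (ha0 : ∀ i, 0 ≤ a i) (hα : 0 < α)
    (x : ι → ℂ) (hx : memRange μ a α x) (ε : ℝ) (hε : 0 < ε) :
    ∃ u : ι → ℂ, memDomAalpha μ a α u ∧
      (eLpNorm (fun i => x i - u i) 2 μ) ^ 2
        + rangeIntegral μ a α (fun i => x i - u i) < ENNReal.ofReal ε := by
  obtain ⟨hx2, y, hy2, hxy⟩ := hx
  have hyam : AEMeasurable y μ := hy2.aestronglyMeasurable.aemeasurable
  set yM : ι → ℂ := hyam.mk y with hyM
  have hyMmeas : Measurable yM := hyam.measurable_mk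
  have hyeq : y =ᵐ[μ] yM := hyam.ae_eq_mk
  set xM : ι → ℂ := fun i => ((a i ^ α : ℝ) : ℂ) * yM i with hxMdef
  have hxMmeas : Measurable xM :=
    (Complex.measurable_ofReal.comp ((Real.continuous_rpow_const hα.le).measurable.comp hameas)).mul hyMmeas
  have hxxM : x =ᵐ[μ] xM := hxy.trans (hyeq.mono fun i hi => by
    simp only [hxMdef]; rw [hi])
  have hxM2 : MemLp xM 2 μ := MemLp.ae_eq hxxM hx2
  have hyM2 : MemLp yM 2 μ := MemLp.ae_eq hyeq hy2
  set M := ∫⁻ i, (‖xM i‖₊ : ℝ≥0∞) ^ 2 ∂μ with hMdef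
  have hM : M ≠ ∞ := by
    rw [hMdef, ← sq_eLpNorm]; exact ENNReal.pow_ne_top hxM2.eLpNorm_ne_top
  set g : ℕ → ι → ℝ≥0∞ := fun n i => if (n:ℝ) < a i then (‖xM i‖₊ : ℝ≥0∞) ^ 2 else 0 with hg
  have hgmeas : ∀ n, Measurable (g n) := fun n =>
    Measurable.ite (measurableSet_lt measurable_const hameas)
      (hxMmeas.nnnorm.coe_nnreal_ennreal.pow_const 2) measurable_const
  have hgle : ∀ n, g n ≤ fun i => (‖xM i‖₊ : ℝ≥0∞) ^ 2 := fun n i => by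
    simp only [hg]; split_ifs
    · exact le_rfl
    · exact zero_le
  have hgtend : Tendsto (fun n => ∫⁻ i, g n i ∂μ) atTop (𝓝 0) := by
    rw [show (0:ℝ≥0∞) = ∫⁻ _ : ι, (0:ℝ≥0∞) ∂μ by simp]
    refine tendsto_lintegral_of_dominated_convergence _ hgmeas
      (fun n => Eventually.of_forall (hgle n)) hM (Eventually.of_forall fun i => ?_)
    refine tendsto_atTop_of_eventually_const (i₀ := ⌈a i⌉₊) fun n hn => ?_
    simp only [hg]
    rw [if_neg]
    exact not_lt.mpr ((Nat.le_ceil (a i)).trans (Nat.cast_le.mpr hn))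
  set C : ℕ → ℝ≥0∞ := fun n => ENNReal.ofReal ((1/(2*(n:ℝ))) ^ (2*α) * Real.Gamma (2*α)) with hC
  have hCtend : Tendsto (fun n => C n * M) atTop (𝓝 0) := by
    have h2n : Tendsto (fun n : ℕ => 2*(n:ℝ)) atTop atTop :=
      (tendsto_natCast_atTop_atTop).const_mul_atTop two_pos
    have h1 : Tendsto (fun n : ℕ => 1/(2*(n:ℝ))) atTop (𝓝 0) := by
      simp only [one_div]
      exact tendsto_inv_atTop_zero.comp h2n
    have h2 : Tendsto (fun r : ℝ => r ^ (2*α)) (𝓝 0) (𝓝 0) := by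
      have h := (Real.continuousAt_rpow_const 0 (2*α) (Or.inr (by positivity))).tendsto
      rwa [Real.zero_rpow (by positivity : 2*α ≠ 0)] at h
    have h3 := (h2.comp h1).mul_const (Real.Gamma (2*α))
    rw [zero_mul] at h3
    have h5 := ENNReal.tendsto_ofReal h3
    rw [ENNReal.ofReal_zero] at h5
    have h6 := ENNReal.Tendsto.mul_const h5 (Or.inr hM)
    rwa [zero_mul] at h6
  have htotal : Tendsto (fun n => (∫⁻ i, g n i ∂μ) + C n * M) atTop (𝓝 0) := by
    have h := hgtend.add hCtend
    simpa using h
  have hev : ∀ᶠ n : ℕ in atTop, (∫⁻ i, g n i ∂μ) + C n * M < ENNReal.ofReal ε :=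
    htotal.eventually_lt_const (ENNReal.ofReal_pos.mpr hε)
  obtain ⟨n, hnlt, hn1⟩ := (hev.and (eventually_ge_atTop 1)).exists
  have hnpos : (0:ℝ) < n := by exact_mod_cast hn1
  set u : ι → ℂ := fun i => if (n:ℝ) < a i then 0 else xM i with hu
  have humeas : Measurable u :=
    Measurable.ite (measurableSet_lt measurable_const hameas) measurable_const hxMmeas
  set w : ι → ℂ := fun i => if (n:ℝ) < a i then xM i else 0 with hwdef
  have hw : ∀ i, xM i - u i = w i := fun i => by
    simp only [hu, hwdef]; split_ifs <;> simp
  have hxw : (fun i => x i - u i) =ᵐ[μ] w := hxxM.mono fun i hi => by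
    show x i - u i = w i
    rw [hi, hw i]
  have hnormw : ∀ i, (‖w i‖₊ : ℝ≥0∞) ^ 2 = g n i := fun i => by
    simp only [hwdef, hg]; split_ifs
    · rfl
    · simp
  refine ⟨u, ⟨⟨?_, ⟨fun i => if (n:ℝ) < a i then 0 else yM i, ?_, ?_⟩⟩, ?_⟩, ?_⟩
  · -- Memℒp u
    refine hxM2.of_le humeas.aestronglyMeasurable (Eventually.of_forall fun i => ?_)
    simp only [hu]; split_ifs
    · simp
    · exact le_rfl
  · -- Memℒp z
    refine hyM2.of_le (Measurable.ite (measurableSet_lt measurable_const hameas)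
      measurable_const hyMmeas).aestronglyMeasurable (Eventually.of_forall fun i => ?_)
    split_ifs
    · simp
    · exact le_rfl
  · -- u = a^α z
    refine Eventually.of_forall fun i => ?_
    simp only [hu, hxMdef]
    split_ifs
    · simp
    · rfl
  · -- Memℒp (a · u)
    refine (hxM2.const_mul (n:ℂ)).of_le
      (((Complex.measurable_ofReal.comp hameas).mul humeas).aestronglyMeasurable)
      (Eventually.of_forall fun i => ?_)
    show ‖(a i : ℂ) * u i‖ ≤ ‖(n:ℂ) * xM i‖
    rw [norm_mul, norm_mul, Complex.norm_real, Complex.norm_natCast, Real.norm_eq_abs,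
      abs_of_nonneg (ha0 i)]
    simp only [hu]; split_ifs with h
    · simp; positivity
    · exact mul_le_mul_of_nonneg_right (not_lt.mp h) (norm_nonneg _)
  · -- the estimate
    have e1 : eLpNorm (fun i => x i - u i) 2 μ ^ 2 = ∫⁻ i, g n i ∂μ := by
      rw [eLpNorm_congr_ae hxw, sq_eLpNorm]
      exact lintegral_congr fun i => hnormw i
    have e2 : rangeIntegral μ a α (fun i => x i - u i) = rangeIntegral μ a α w := by
      unfold rangeIntegral
      refine lintegral_congr fun t => ?_
      congr 1
      unfold heatNormSq
      refine lintegral_congr_ae (hxw.mono fun i hi => ?_)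
      simp only at hi ⊢
      rw [hi]
    have hGle : (∫⁻ i, g n i ∂μ) ≤ M := lintegral_mono (hgle n)
    have hGne : (∫⁻ i, g n i ∂μ) ≠ ∞ := (lt_of_le_of_lt hGle hM.lt_top).ne
    have hheat : ∀ t ∈ Set.Ioi (0:ℝ), heatNormSq μ a w t
        ≤ ENNReal.ofReal (Real.exp (-(2*t*(n:ℝ)))) * ∫⁻ i, g n i ∂μ := by
      intro t ht
      have ht' : (0:ℝ) < t := ht
      unfold heatNormSq
      calc ∫⁻ i, (‖w i‖₊:ℝ≥0∞)^2 * ENNReal.ofReal (Real.exp (-(2*t*a i))) ∂μ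
          ≤ ∫⁻ i, g n i * ENNReal.ofReal (Real.exp (-(2*t*(n:ℝ)))) ∂μ := by
            refine lintegral_mono fun i => ?_
            rw [hnormw i]
            simp only [hg]
            split_ifs with h
            · exact mul_le_mul' le_rfl (ENNReal.ofReal_le_ofReal
                (Real.exp_le_exp.mpr (by nlinarith)))
            · simp
        _ = (∫⁻ i, g n i ∂μ) * ENNReal.ofReal (Real.exp (-(2*t*(n:ℝ)))) :=
            lintegral_mul_const _ (hgmeas n)
        _ = ENNReal.ofReal (Real.exp (-(2*t*(n:ℝ)))) * ∫⁻ i, g n i ∂μ := mul_comm _ _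
    have e3 : rangeIntegral μ a α w ≤ C n * M := by
      calc rangeIntegral μ a α w
          ≤ ∫⁻ t in Set.Ioi (0:ℝ), ENNReal.ofReal (t^(2*α-1)) *
              (ENNReal.ofReal (Real.exp (-(2*t*(n:ℝ)))) * ∫⁻ i, g n i ∂μ) := by
            unfold rangeIntegral
            refine lintegral_mono_ae ?_
            rw [ae_restrict_iff' measurableSet_Ioi]
            exact Eventually.of_forall fun t ht => mul_le_mul' le_rfl (hheat t ht)
        _ = (∫⁻ t in Set.Ioi (0:ℝ), ENNReal.ofReal (t^(2*α-1)) *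
              ENNReal.ofReal (Real.exp (-(2*t*(n:ℝ))))) * ∫⁻ i, g n i ∂μ := by
            simp_rw [← mul_assoc]
            exact lintegral_mul_const' _ _ hGne
        _ = C n * ∫⁻ i, g n i ∂μ := by rw [lintegral_K hα hnpos]
        _ ≤ C n * M := mul_le_mul' le_rfl hGle
    rw [e1, e2]
    exact lt_of_le_of_lt (add_le_add le_rfl e3) hnlt




lemma re_int_nonneg {β : Type*} [MeasurableSpace β] (ν : Measure β) {f : β → ℂ}
    (h : ∀ᵐ i ∂ν, 0 ≤ (f i).re) : 0 ≤ (∫ i, f i ∂ν).re := by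
  by_cases hf : Integrable f ν
  · have := integral_re hf
    simp only [RCLike.re_to_complex] at this
    rw [← this]
    exact integral_nonneg_of_ae h
  · rw [integral_undef hf]; simp


variable {ι : Type*} [MeasurableSpace ι] (μ : Measure ι) (a : ι → ℝ) (α : ℝ)

lemma part2 (ha0 : ∀ i, 0 ≤ a i) (u v : ι → ℂ) :
    innerRange μ a α (fun i => (a i : ℂ) * u i) v
      = innerRange μ a α u (fun i => (a i : ℂ) * v i) := by
  have h : ∀ i, (starRingEnd ℂ) ((a i : ℂ) * u i) * v i
      = (starRingEnd ℂ) (u i) * ((a i : ℂ) * v i) := fun i => by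
    rw [map_mul, Complex.conj_ofReal]; ring
  unfold innerRange
  simp only [h]

lemma part3 (ha0 : ∀ i, 0 ≤ a i) (hα : 0 < α) (u : ι → ℂ) :
    0 ≤ (innerRange μ a α (fun i => (a i : ℂ) * u i) u).re := by
  have key : ∀ (c : ℝ) (i : ι), 0 ≤ c →
      0 ≤ ((c : ℂ) * ((starRingEnd ℂ) ((a i : ℂ) * u i) * u i)).re := by
    intro c i hc
    have h1 : (starRingEnd ℂ) ((a i : ℂ) * u i) * u i
        = ((a i : ℂ)) * ((starRingEnd ℂ) (u i) * u i) := by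
      rw [map_mul, Complex.conj_ofReal]; ring
    rw [h1, mul_comm ((starRingEnd ℂ) (u i)) (u i), Complex.mul_conj]
    rw [← Complex.ofReal_mul, ← Complex.ofReal_mul, Complex.ofReal_re]
    exact mul_nonneg hc (mul_nonneg (ha0 i) (Complex.normSq_nonneg _))
  unfold innerRange
  rw [Complex.add_re]
  refine add_nonneg ?_ ?_
  · refine re_int_nonneg μ (Eventually.of_forall fun i => ?_)
    have := key 1 i zero_le_one
    simpa using this
  · refine re_int_nonneg _ ?_
    rw [ae_restrict_iff' measurableSet_Ioi]
    refine Eventually.of_forall fun t ht => ?_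
    rw [Complex.re_ofReal_mul]
    refine mul_nonneg (Real.rpow_nonneg (le_of_lt ht) _) ?_
    refine re_int_nonneg μ (Eventually.of_forall fun i => ?_)
    exact key _ i (Real.exp_nonneg _)

lemma part4 (hameas : Measurable a) (ha0 : ∀ i, 0 ≤ a i) (hα : 0 < α) (x : ι → ℂ) (hx : memRange μ a α x) :
    ∃ u : ι → ℂ, memDomAalpha μ a α u ∧ x =ᵐ[μ] fun i => u i + (a i : ℂ) * u i := by
  obtain ⟨hx2, y, hy2, hxy⟩ := hx
  set d : ι → ℂ := fun i => ((1 + a i : ℝ) : ℂ) with hd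
  have hdmeas : Measurable d := Complex.measurable_ofReal.comp (by fun_prop)
  have hdnorm : ∀ i, ‖d i‖ = 1 + a i := fun i => by
    rw [hd, Complex.norm_real, Real.norm_eq_abs, abs_of_pos (by linarith [ha0 i])]
  have hd1 : ∀ i, (1:ℝ) ≤ ‖d i‖ := fun i => by rw [hdnorm i]; linarith [ha0 i]
  have hdne : ∀ i, d i ≠ 0 := fun i => by
    intro h; have := hdnorm i; rw [h, norm_zero] at this; linarith [ha0 i]
  refine ⟨fun i => x i * (d i)⁻¹, ⟨⟨?_, ⟨fun i => y i * (d i)⁻¹, ?_, ?_⟩⟩, ?_⟩, ?_⟩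
  · -- Memℒp u
    refine hx2.of_le (hx2.aestronglyMeasurable.mul
      (hdmeas.inv.stronglyMeasurable.aestronglyMeasurable)) (Eventually.of_forall fun i => ?_)
    rw [norm_mul, norm_inv]
    calc ‖x i‖ * ‖d i‖⁻¹ ≤ ‖x i‖ * 1 := by
          refine mul_le_mul_of_nonneg_left ?_ (norm_nonneg _)
          exact inv_le_one_of_one_le₀ (hd1 i)
      _ = ‖x i‖ := mul_one _
  · -- Memℒp z
    refine hy2.of_le (hy2.aestronglyMeasurable.mul
      (hdmeas.inv.stronglyMeasurable.aestronglyMeasurable)) (Eventually.of_forall fun i => ?_)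
    rw [norm_mul, norm_inv]
    calc ‖y i‖ * ‖d i‖⁻¹ ≤ ‖y i‖ * 1 := by
          refine mul_le_mul_of_nonneg_left ?_ (norm_nonneg _)
          exact inv_le_one_of_one_le₀ (hd1 i)
      _ = ‖y i‖ := mul_one _
  · -- u =ᵐ a^α z
    refine hxy.mono fun i hi => ?_
    simp only at hi ⊢
    rw [hi]; ring
  · -- Memℒp (a · u)
    refine hx2.of_le ((Complex.measurable_ofReal.comp hameas).aestronglyMeasurable.mul
      (hx2.aestronglyMeasurable.mul (hdmeas.inv.stronglyMeasurable.aestronglyMeasurable)))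
      (Eventually.of_forall fun i => ?_)
    have h1 : a i * (1 + a i)⁻¹ ≤ 1 := by
      rw [← div_eq_mul_inv, div_le_one (by linarith [ha0 i])]; linarith [ha0 i]
    show ‖(a i : ℂ) * (x i * (d i)⁻¹)‖ ≤ ‖x i‖
    rw [norm_mul, norm_mul, norm_inv, hdnorm i, Complex.norm_real, Real.norm_eq_abs,
      abs_of_nonneg (ha0 i)]
    calc a i * (‖x i‖ * (1 + a i)⁻¹) = a i * (1 + a i)⁻¹ * ‖x i‖ := by ring
      _ ≤ 1 * ‖x i‖ := mul_le_mul_of_nonneg_right h1 (norm_nonneg _)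
      _ = ‖x i‖ := one_mul _
  · -- x = u + a u
    refine Eventually.of_forall fun i => ?_
    have hne := hdne i
    have h1 : (1 : ℂ) + (a i : ℂ) = d i := by rw [hd]; push_cast; ring
    show x i = x i * (d i)⁻¹ + (a i : ℂ) * (x i * (d i)⁻¹)
    rw [show x i * (d i)⁻¹ + (a i : ℂ) * (x i * (d i)⁻¹)
        = ((1:ℂ) + (a i : ℂ)) * (x i * (d i)⁻¹) by ring, h1]
    rw [mul_comm (x i) ((d i)⁻¹), ← mul_assoc, mul_inv_cancel₀ hne, one_mul]



end auxstmt

/-- The realization `A_α` of `A` in the Hilbert space `R(A^α)`, with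
domain `D(A_α) = D(A) ∩ R(A^α)` and `A_α u = Au`, is densely defined, symmetric,
nonnegative and selfadjoint in `R(A^α)`; in particular `R(I + A_α) = R(A^α)`. -/



theorem stmt4 {ι : Type*} [MeasurableSpace ι] (μ : Measure ι)
    (a : ι → ℝ) (hameas : Measurable a) (ha0 : ∀ i, 0 ≤ a i)
    (hker : ∀ᵐ i ∂μ, a i ≠ 0) (α : ℝ) (hα : 0 < α) :
    -- densely defined in `R(A^α)`
    (∀ x : ι → ℂ, memRange μ a α x → ∀ ε > (0 : ℝ), ∃ u : ι → ℂ,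
        memDomAalpha μ a α u ∧
        (eLpNorm (fun i => x i - u i) 2 μ) ^ 2
          + rangeIntegral μ a α (fun i => x i - u i) < ENNReal.ofReal ε) ∧
    -- symmetric in `R(A^α)`
    (∀ u v : ι → ℂ, memDomAalpha μ a α u → memDomAalpha μ a α v →
        innerRange μ a α (fun i => (a i : ℂ) * u i) v
          = innerRange μ a α u (fun i => (a i : ℂ) * v i)) ∧
    -- nonnegative in `R(A^α)`
    (∀ u : ι → ℂ, memDomAalpha μ a α u →
        0 ≤ (innerRange μ a α (fun i => (a i : ℂ) * u i) u).re) ∧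
    -- range condition `R(I + A_α) = R(A^α)`, giving selfadjointness
    (∀ x : ι → ℂ, memRange μ a α x → ∃ u : ι → ℂ,
        memDomAalpha μ a α u ∧ x =ᵐ[μ] fun i => u i + (a i : ℂ) * u i) := by
  exact ⟨fun x hx ε hε => part1 μ a α hameas ha0 hα x hx ε hε,
   fun u v _ _ => part2 μ a α ha0 u v,
   fun u _ => part3 μ a α ha0 hα u,
   fun x hx => part4 μ a α hameas ha0 hα x hx⟩
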